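/- Let f be a special causal function, ε > 0, and suppose for each strict value a of f and each interval (a₋, a₊) ∋ a there exists a Lyapunov function τ : M → [a₋, a₊] with τ = a₊ on {f ≥ a₊} and τ = a₋ on {f ≤ a₋}. Then there exists a Lyapunov function τ with |τ(x) − f(x)| ≤ ε for all x ∈ M. -/

import Mathlib

open Manifold Set MeasureTheory Filter

variable {E : Type*} [NormedAddCommGroup E] [NormedSpace ℝ E]
  {H : Type*} [TopologicalSpace H] {I : ModelWithCorners ℝ E H}
  {M : Type*} [TopologicalSpace M] [ChartedSpace H M] [IsManifold I (⊤ : ℕ∞) M]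

/-- A closed cone field: each fiber is a convex cone, closed after adding `0`, either
singular (the whole tangent space) or regular (contained in an open half space),
and the union with the zero section is closed in the tangent bundle. -/
def IsClosedConeField (I : ModelWithCorners ℝ E H) (M : Type*) [TopologicalSpace M]
    [ChartedSpace H M] [IsManifold I (⊤ : ℕ∞) M] (C : ∀ x : M, Set (TangentSpace I x)) : Prop :=
  (∀ x, Convex ℝ (C x)) ∧
  (∀ x, ∀ v ∈ C x, ∀ t : ℝ, 0 < t → t • v ∈ C x) ∧
  (∀ x, IsClosed (insert (0 : TangentSpace I x) (C x))) ∧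
  IsClosed {p : TangentBundle I M | p.snd = 0 ∨ p.snd ∈ C p.proj} ∧
  (∀ x : M, C x = Set.univ ∨ ∃ p : TangentSpace I x →L[ℝ] ℝ, ∀ v ∈ C x, 0 < p v)

/-- A causal curve for the cone field `C` on `[a,b]`: continuous, almost everywhere
differentiable with derivative in the cone (or zero). -/
def IsCausalCurve (C : ∀ x : M, Set (TangentSpace I x)) (γ : ℝ → M) (a b : ℝ) : Prop :=
  ContinuousOn γ (Set.Icc a b) ∧
  ∀ᵐ t ∂(volume.restrict (Set.Icc a b)),
    MDifferentiableAt 𝓘(ℝ, ℝ) I γ t ∧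
      mfderiv 𝓘(ℝ, ℝ) I γ t (1 : ℝ) ∈ insert (0 : TangentSpace I (γ t)) (C (γ t))

/-- The causal future of a point. -/
def causalFuture (C : ∀ x : M, Set (TangentSpace I x)) (x : M) : Set M :=
  insert x {y | ∃ a b : ℝ, a < b ∧ ∃ γ : ℝ → M, IsCausalCurve C γ a b ∧
    γ a = x ∧ γ b = y ∧ ∃ s ∈ Set.Icc a b, ∃ t ∈ Set.Icc a b, γ s ≠ γ t}

/-- A causal function. -/
def IsCausalFun (C : ∀ x : M, Set (TangentSpace I x)) (f : M → ℝ) : Prop :=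
  Continuous f ∧ ∀ x, ∀ y ∈ causalFuture C x, f x ≤ f y

/-- A Lyapunov function for `C`. -/
def IsLyapunov (C : ∀ x : M, Set (TangentSpace I x)) (τ : M → ℝ) : Prop :=
  ContMDiff I 𝓘(ℝ, ℝ) (⊤ : ℕ∞) τ ∧
  ∀ x : M, mfderiv I 𝓘(ℝ, ℝ) τ x ≠ 0 → ∀ v ∈ C x, 0 < show ℝ from mfderiv I 𝓘(ℝ, ℝ) τ x v

/-- A neutral point of a function `f` with respect to `C`. -/
def IsNeutralPt (C : ∀ x : M, Set (TangentSpace I x)) (f : M → ℝ) (x : M) : Prop :=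
  C x = Set.univ ∨ ∃ y ∈ causalFuture C x, y ≠ x ∧ f y = f x

/-- A strict value of `f`. -/
def IsStrictValue (C : ∀ x : M, Set (TangentSpace I x)) (f : M → ℝ) (a : ℝ) : Prop :=
  ¬ ∃ x : M, IsNeutralPt C f x ∧ f x = a

/-- A special causal function. -/
def IsSpecialCausal (C : ∀ x : M, Set (TangentSpace I x)) (f : M → ℝ) : Prop :=
  IsCausalFun C f ∧ Dense {a : ℝ | IsStrictValue C f a}


/-- Approximation of a special causal function by Lyapunov functions, given step
Lyapunov functions on all intervals around strict values. -/
theorem lyapunov_approximation (C : ∀ x : M, Set (TangentSpace I x))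
    (hC : IsClosedConeField I M C) (f : M → ℝ) (hf : IsSpecialCausal C f)
    (ε : ℝ) (hε : 0 < ε)
    (hstep : ∀ a : ℝ, IsStrictValue C f a → ∀ am ap : ℝ, am < a → a < ap →
      ∃ τ : M → ℝ, IsLyapunov C τ ∧ (∀ x : M, τ x ∈ Set.Icc am ap) ∧
        (∀ x : M, ap ≤ f x → τ x = ap) ∧ ∀ x : M, f x ≤ am → τ x = am) :
    ∃ τ : M → ℝ, IsLyapunov C τ ∧ ∀ x : M, |τ x - f x| ≤ ε := by
  classical
  obtain ⟨hcausal, hdense⟩ := hf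
  -- choose a strict value in each interval (kε, (k+1)ε)
  have hsv : ∀ k : ℤ, ∃ b, IsStrictValue C f b ∧ b ∈ Set.Ioo ((k : ℝ) * ε) (((k : ℝ) + 1) * ε) := by
    intro k
    have hlt : (k : ℝ) * ε < ((k : ℝ) + 1) * ε := by nlinarith
    obtain ⟨b, hb, hb2⟩ := hdense.exists_between hlt
    exact ⟨b, hb, hb2⟩
  choose b hb hbI using hsv
  choose T hTL hTmem hTup hTdn using fun k : ℤ =>
    hstep (b k) (hb k) ((k : ℝ) * ε) (((k : ℝ) + 1) * ε) (hbI k).1 (hbI k).2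
  -- the glued functions
  set F : ℕ → Finset ℤ := fun n => Finset.Ioc (-(n : ℤ) - 1) ((n : ℤ) - 1) with hF
  set g : ℕ → M → ℝ :=
    fun n x => (∑ k ∈ F n, (T k x - (k : ℝ) * ε)) - (n : ℝ) * ε with hgdef
  -- key computation: if |f x| < nε then g n x = T ⌊f x / ε⌋ x
  have key : ∀ (n : ℕ) (x : M), |f x| < (n : ℝ) * ε → g n x = T ⌊f x / ε⌋ x := by
    intro n x hx
    set m := ⌊f x / ε⌋ with hm
    have hml : (m : ℝ) * ε ≤ f x := by
      have h1 : (m : ℝ) ≤ f x / ε := Int.floor_le _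
      rwa [le_div_iff₀ hε] at h1
    have hmu : f x < ((m : ℝ) + 1) * ε := by
      have h1 : f x / ε < (m : ℝ) + 1 := Int.lt_floor_add_one _
      rw [div_lt_iff₀ hε] at h1; linarith
    have hxl : -((n : ℝ) * ε) < f x := neg_lt_of_abs_lt hx
    have hxu : f x < (n : ℝ) * ε := lt_of_abs_lt hx
    have hmn1 : -(n : ℤ) ≤ m := by
      rw [hm]
      apply Int.le_floor.mpr
      rw [le_div_iff₀ hε]; push_cast; linarith
    have hmn2 : m ≤ (n : ℤ) - 1 := by
      have h1 : m < (n : ℤ) := by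
        rw [hm]
        apply Int.floor_lt.mpr
        rw [div_lt_iff₀ hε]; push_cast; linarith
      omega
    have hb1 : -(n : ℤ) - 1 ≤ m - 1 := by omega
    have hb2 : (m : ℤ) - 1 ≤ m := by omega
    have hb3 : m ≤ (n : ℤ) - 1 := hmn2
    -- split the sum at m
    have hsplit1 : F n = Finset.Ioc (-(n : ℤ) - 1) (m - 1) ∪ Finset.Ioc (m - 1) ((n : ℤ) - 1) := by
      rw [hF, Finset.Ioc_union_Ioc_eq_Ioc hb1 (le_trans hb2 hb3)]
    have hsplit2 : Finset.Ioc ((m : ℤ) - 1) ((n : ℤ) - 1)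
        = Finset.Ioc ((m : ℤ) - 1) m ∪ Finset.Ioc m ((n : ℤ) - 1) := by
      rw [Finset.Ioc_union_Ioc_eq_Ioc hb2 hb3]
    have hdisj1 : Disjoint (Finset.Ioc (-(n : ℤ) - 1) (m - 1)) (Finset.Ioc (m - 1) ((n : ℤ) - 1)) := by
      rw [Finset.disjoint_left]
      intro k hk1 hk2
      simp only [Finset.mem_Ioc] at hk1 hk2
      omega
    have hdisj2 : Disjoint (Finset.Ioc ((m : ℤ) - 1) m) (Finset.Ioc m ((n : ℤ) - 1)) := by
      rw [Finset.disjoint_left]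
      intro k hk1 hk2
      simp only [Finset.mem_Ioc] at hk1 hk2
      omega
    have hsum1 : ∑ k ∈ Finset.Ioc (-(n : ℤ) - 1) (m - 1), (T k x - (k : ℝ) * ε)
        = ((m : ℝ) + (n : ℝ)) * ε := by
      have heach : ∀ k ∈ Finset.Ioc (-(n : ℤ) - 1) (m - 1), (T k x - (k : ℝ) * ε) = ε := by
        intro k hk
        simp only [Finset.mem_Ioc] at hk
        have hk1 : (k : ℤ) + 1 ≤ m := by omega
        have hk1' : ((k : ℝ) + 1) * ε ≤ f x := by
          have : ((k : ℝ) + 1) ≤ (m : ℝ) := by exact_mod_cast hk1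
          nlinarith
        rw [hTup k x hk1']; ring
      rw [Finset.sum_congr rfl heach, Finset.sum_const, nsmul_eq_mul]
      have hcard : ((Finset.Ioc (-(n : ℤ) - 1) (m - 1)).card : ℤ) = m + n := by
        have h := Int.card_Ioc (-(n : ℤ) - 1) (m - 1)
        omega
      have : ((Finset.Ioc (-(n : ℤ) - 1) (m - 1)).card : ℝ) = (m : ℝ) + (n : ℝ) := by
        exact_mod_cast hcard
      rw [this]
    have hsum2 : ∑ k ∈ Finset.Ioc ((m : ℤ) - 1) m, (T k x - (k : ℝ) * ε) = T m x - (m : ℝ) * ε := by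
      have hsingle : Finset.Ioc ((m : ℤ) - 1) m = {m} := by
        ext k; simp only [Finset.mem_Ioc, Finset.mem_singleton]; omega
      rw [hsingle, Finset.sum_singleton]
    have hsum3 : ∑ k ∈ Finset.Ioc m ((n : ℤ) - 1), (T k x - (k : ℝ) * ε) = 0 := by
      apply Finset.sum_eq_zero
      intro k hk
      simp only [Finset.mem_Ioc] at hk
      have hk1 : m + 1 ≤ k := by omega
      have hk1' : f x ≤ (k : ℝ) * ε := by
        have : (m : ℝ) + 1 ≤ (k : ℝ) := by exact_mod_cast hk1
        nlinarith
      rw [hTdn k x hk1']; ring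
    have : ∑ k ∈ F n, (T k x - (k : ℝ) * ε)
        = ((m : ℝ) + (n : ℝ)) * ε + (T m x - (m : ℝ) * ε) := by
      rw [hsplit1, Finset.sum_union hdisj1, hsplit2, Finset.sum_union hdisj2,
        hsum1, hsum2, hsum3]
      ring
    rw [hgdef]
    simp only
    rw [this]
    ring
  -- the choice of scale at each point
  set N : M → ℕ := fun x => ⌊|f x| / ε⌋.toNat + 1 with hN
  have hNx : ∀ x : M, |f x| < ((N x : ℕ) : ℝ) * ε := by
    intro x
    have h0 : (0 : ℝ) ≤ |f x| / ε := div_nonneg (abs_nonneg _) hε.le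
    have h1 : |f x| / ε < (⌊|f x| / ε⌋ : ℝ) + 1 := Int.lt_floor_add_one _
    have h2 : (⌊|f x| / ε⌋ : ℝ) = ((⌊|f x| / ε⌋.toNat : ℕ) : ℝ) := by
      exact_mod_cast (congrArg (Int.cast : ℤ → ℝ) (Int.toNat_of_nonneg (Int.floor_nonneg.mpr h0))).symm
    rw [hN]
    have : |f x| / ε < ((⌊|f x| / ε⌋.toNat + 1 : ℕ) : ℝ) := by
      push_cast
      rw [← h2]; linarith
    calc |f x| = (|f x| / ε) * ε := by field_simp
    _ < ((⌊|f x| / ε⌋.toNat + 1 : ℕ) : ℝ) * ε := by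
        apply mul_lt_mul_of_pos_right this hε
  set τ : M → ℝ := fun x => g (N x) x with hτ
  -- local equality with g n
  have hloc : ∀ (x₀ : M) (n : ℕ), |f x₀| < (n : ℝ) * ε → τ =ᶠ[nhds x₀] g n := by
    intro x₀ n h
    have hU : IsOpen (f ⁻¹' Set.Ioo (-((n : ℝ) * ε)) ((n : ℝ) * ε)) :=
      isOpen_Ioo.preimage hcausal.1
    have hx₀ : x₀ ∈ f ⁻¹' Set.Ioo (-((n : ℝ) * ε)) ((n : ℝ) * ε) := by
      simp only [Set.mem_preimage, Set.mem_Ioo]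
      exact ⟨neg_lt_of_abs_lt h, lt_of_abs_lt h⟩
    filter_upwards [hU.mem_nhds hx₀] with y hy
    simp only [Set.mem_preimage, Set.mem_Ioo] at hy
    have hy' : |f y| < (n : ℝ) * ε := abs_lt.mpr ⟨hy.1, hy.2⟩
    rw [hτ]
    simp only
    rw [key (N y) y (hNx y), key n y hy']
  -- smoothness of the glued functions
  have hgsmooth : ∀ n : ℕ, ContMDiff I 𝓘(ℝ, ℝ) (⊤ : ℕ∞) (g n) := by
    intro n
    apply ContMDiff.sub _ contMDiff_const
    exact contMDiff_finset_sum fun k _ => ((hTL k).1).sub contMDiff_const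
  -- derivative of the glued functions
  have hgD : ∀ (n : ℕ) (x : M), HasMFDerivAt I 𝓘(ℝ, ℝ) (g n) x
      (∑ k ∈ F n, mfderiv I 𝓘(ℝ, ℝ) (T k) x) := by
    intro n x
    have h1 : ∀ s : Finset ℤ, HasMFDerivAt I 𝓘(ℝ, ℝ)
        (fun y => ∑ k ∈ s, (T k y - (k : ℝ) * ε)) x
        (∑ k ∈ s, mfderiv I 𝓘(ℝ, ℝ) (T k) x) := by
      intro s
      induction s using Finset.induction with
      | empty =>
        simp only [Finset.sum_empty]
        exact hasMFDerivAt_const (0 : ℝ) x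
      | @insert a s ha ih =>
        have hTa : HasMFDerivAt I 𝓘(ℝ, ℝ) (fun y => T a y - (a : ℝ) * ε) x
            (mfderiv I 𝓘(ℝ, ℝ) (T a) x) := by
          have hda : MDifferentiableAt I 𝓘(ℝ, ℝ) (T a) x :=
            ((hTL a).1.mdifferentiable (by simp)) x
          have := hda.hasMFDerivAt.sub (hasMFDerivAt_const ((a : ℝ) * ε) x)
          exact this.congr_mfderiv (sub_zero _)
        have heq : (fun y => ∑ k ∈ insert a s, (T k y - (k : ℝ) * ε))
            = fun y => (T a y - (a : ℝ) * ε) + ∑ k ∈ s, (T k y - (k : ℝ) * ε) := by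
          funext y; rw [Finset.sum_insert ha]
        rw [heq, Finset.sum_insert ha]
        exact (hTa.add ih).congr_mfderiv (by exact (Finset.sum_insert (M := TangentSpace I x →L[ℝ] ℝ) (f := fun k => (mfderiv I 𝓘(ℝ, ℝ) (T k) x : TangentSpace I x →L[ℝ] ℝ)) ha).symm)
    have := (h1 (F n)).sub (hasMFDerivAt_const ((n : ℝ) * ε) x)
    exact this.congr_mfderiv (sub_zero _)
  refine ⟨τ, ⟨?_, ?_⟩, ?_⟩
  · -- smoothness
    intro x
    exact ((hgsmooth (N x)) x).congr_of_eventuallyEq (hloc x (N x) (hNx x))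
  · -- Lyapunov property
    intro x hne v hv
    have heq : mfderiv I 𝓘(ℝ, ℝ) τ x = mfderiv I 𝓘(ℝ, ℝ) (g (N x)) x :=
      (hloc x (N x) (hNx x)).mfderiv_eq
    have hD : mfderiv I 𝓘(ℝ, ℝ) (g (N x)) x = ∑ k ∈ F (N x), mfderiv I 𝓘(ℝ, ℝ) (T k) x :=
      (hgD (N x) x).mfderiv
    rw [heq, hD] at hne
    have hex : ∃ k ∈ F (N x), mfderiv I 𝓘(ℝ, ℝ) (T k) x ≠ 0 := by
      by_contra hcon
      push_neg at hcon
      apply hne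
      exact Finset.sum_eq_zero fun k hk => hcon k hk
    obtain ⟨k₀, hk₀, hk₀ne⟩ := hex
    have hgoal : (0 : ℝ) <
        (∑ k ∈ F (N x), mfderiv I 𝓘(ℝ, ℝ) (T k) x : TangentSpace I x →L[ℝ] ℝ) v := by
      have hsa : (∑ k ∈ F (N x), mfderiv I 𝓘(ℝ, ℝ) (T k) x : TangentSpace I x →L[ℝ] ℝ) v
          = ∑ k ∈ F (N x), (mfderiv I 𝓘(ℝ, ℝ) (T k) x : TangentSpace I x →L[ℝ] ℝ) v :=
        ContinuousLinearMap.sum_apply _ _ _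
      rw [hsa]
      apply Finset.sum_pos'
      · intro k _
        by_cases hk : mfderiv I 𝓘(ℝ, ℝ) (T k) x = 0
        · rw [hk]; simp; exact le_refl _
        · exact le_of_lt ((hTL k).2 x hk v hv)
      · exact ⟨k₀, hk₀, (hTL k₀).2 x hk₀ne v hv⟩
    show (0 : ℝ) < mfderiv I 𝓘(ℝ, ℝ) τ x v
    rw [heq, hD]
    exact hgoal
  · -- the approximation bound
    intro x
    have hτx : τ x = T ⌊f x / ε⌋ x := key (N x) x (hNx x)
    set m := ⌊f x / ε⌋ with hm
    have hml : (m : ℝ) * ε ≤ f x := by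
      have h1 : (m : ℝ) ≤ f x / ε := Int.floor_le _
      rwa [le_div_iff₀ hε] at h1
    have hmu : f x < ((m : ℝ) + 1) * ε := by
      have h1 : f x / ε < (m : ℝ) + 1 := Int.lt_floor_add_one _
      rw [div_lt_iff₀ hε] at h1; linarith
    have hmem := hTmem m x
    rw [Set.mem_Icc] at hmem
    rw [hτx]
    rw [abs_le]
    constructor <;> nlinarith [hmem.1, hmem.2]
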